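/- The 'number operator' identity: for the normalized Carlitz polynomials f_i, the operators a⁺ = τ - I and a⁻ = d satisfy a⁺f_{i-1} = [i]f_i and a⁻f_i = f_{i-1} for i ≥ 1, and a⁻f_0 = 0; consequently (a⁺a⁻)f_i = [i]f_i for all i ≥ 0. -/

import Mathlib

open Polynomial Finset

/-- The Carlitz bracket `[i] = x^{q^i} - x` in `F_q[x]`. -/
noncomputable def carBr (Fq : Type) [Field Fq] [Fintype Fq] (q i : ℕ) : Polynomial Fq :=
  X ^ q ^ i - X

/-- The Carlitz factorial `D_0 = 1`, `D_i = [i]·D_{i-1}^q`. -/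
noncomputable def carD (Fq : Type) [Field Fq] [Fintype Fq] (q : ℕ) : ℕ → Polynomial Fq
  | 0 => 1
  | i + 1 => carBr Fq q (i + 1) * (carD Fq q i) ^ q

/-- The (non-normalized) Carlitz polynomial `e_i(s) = ∏_{m ∈ F_q[x], deg m < i} (s - m)`,
the product over all `q^i` polynomials of degree `< i` (including `0`); `e_0(s) = s`. -/
noncomputable def carE (Fq : Type) [Field Fq] [Fintype Fq] (i : ℕ) (s : Polynomial Fq) :
    Polynomial Fq :=
  ∏ c : Fin i → Fq, (s - ∑ j : Fin i, Polynomial.C (c j) * X ^ (j : ℕ))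

/-- The normalized Carlitz polynomial `f_i = e_i/D_i`, as an `F_q(x)`-valued function
of `t ∈ F_q[x]`. -/
noncomputable def fC (Fq : Type) [Field Fq] [Fintype Fq] (q i : ℕ) (t : Polynomial Fq) :
    RatFunc Fq :=
  algebraMap (Polynomial Fq) (RatFunc Fq) (carE Fq i t) /
    algebraMap (Polynomial Fq) (RatFunc Fq) (carD Fq q i)

/-- `d f_i`, i.e. `f_{i-1}` for `i ≥ 1` and `0` for `i = 0`. -/
noncomputable def dfC (Fq : Type) [Field Fq] [Fintype Fq] (q i : ℕ) (t : Polynomial Fq) :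
    RatFunc Fq :=
  match i with
  | 0 => 0
  | i + 1 => fC Fq q i t

section Aux

variable {Fq : Type} [Field Fq] [Fintype Fq]

/-- Frobenius additivity in `F_q[x]` for the exponent `q = |F_q|`. -/
lemma fqx_add_pow (a b : Polynomial Fq) :
    (a + b) ^ Fintype.card Fq = a ^ Fintype.card Fq + b ^ Fintype.card Fq := by
  haveI : CharP Fq (ringChar Fq) := ringChar.charP Fq
  obtain ⟨n, hp, hcard⟩ := FiniteField.card Fq (ringChar Fq)
  haveI : Fact (ringChar Fq).Prime := ⟨hp⟩
  rw [hcard]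
  exact add_pow_char_pow (R := Polynomial Fq) a b _ _

lemma fqx_sub_pow (a b : Polynomial Fq) :
    (a - b) ^ Fintype.card Fq = a ^ Fintype.card Fq - b ^ Fintype.card Fq := by
  haveI : CharP Fq (ringChar Fq) := ringChar.charP Fq
  obtain ⟨n, hp, hcard⟩ := FiniteField.card Fq (ringChar Fq)
  haveI : Fact (ringChar Fq).Prime := ⟨hp⟩
  rw [hcard]
  exact sub_pow_char_pow (R := Polynomial Fq) a b _

/-- `∏_{a ∈ F_q} (X - a) = X^q - X`. -/
lemma prod_X_sub_C_fq : ∏ a : Fq, (X - C a) = X ^ Fintype.card Fq - X := by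
  have h := FiniteField.roots_X_pow_card_sub_X Fq
  have hm : (X ^ Fintype.card Fq - X : Polynomial Fq).Monic :=
    monic_X_pow_sub (by rw [degree_X]; exact_mod_cast Fintype.one_lt_card)
  have := prod_multiset_X_sub_C_of_monic_of_roots_card_eq hm ?_
  · rw [← this, h, Finset.prod_eq_multiset_prod]
  · rw [h, FiniteField.X_pow_card_sub_X_natDegree_eq Fq Fintype.one_lt_card]
    simp

/-- `∏_{a ∈ F_q} (Y - a·d) = Y^q - d^{q-1}·Y` in `F_q[x]`. -/
lemma prod_lin (Y d : Polynomial Fq) :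
    ∏ a : Fq, (Y - C a * d) = Y ^ Fintype.card Fq - d ^ (Fintype.card Fq - 1) * Y := by
  have hq2 : 1 < Fintype.card Fq := Fintype.one_lt_card
  by_cases hd : d = 0
  · have : Fintype.card Fq - 1 ≠ 0 := by omega
    simp [hd, this, Finset.prod_const, zero_pow this]
  · set q := Fintype.card Fq with hqdef
    apply IsFractionRing.injective (Polynomial Fq) (RatFunc Fq)
    set φ := algebraMap (Polynomial Fq) (RatFunc Fq) with hφ
    have hv : φ d ≠ 0 := by
      simpa using (map_ne_zero_iff φ (IsFractionRing.injective _ _)).mpr hd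
    set z : RatFunc Fq := φ Y / φ d with hz
    have hzz : φ d * z = φ Y := by rw [hz, mul_div_assoc', mul_div_cancel_left₀ _ hv]
    have key : ∏ a : Fq, (z - algebraMap Fq (RatFunc Fq) a) = z ^ q - z := by
      have := congrArg (aeval z) (prod_X_sub_C_fq (Fq := Fq))
      simpa [map_prod] using this
    have expand : φ (∏ a : Fq, (Y - C a * d)) =
        φ d ^ q * ∏ a : Fq, (z - algebraMap Fq (RatFunc Fq) a) := by
      rw [map_prod]
      have hcc : φ d ^ q * ∏ a : Fq, (z - algebraMap Fq (RatFunc Fq) a)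
          = ∏ a : Fq, (φ d * (z - algebraMap Fq (RatFunc Fq) a)) := by
        rw [Finset.prod_mul_distrib, Finset.prod_const, Finset.card_univ]
      rw [hcc]
      refine Finset.prod_congr rfl fun a _ => ?_
      have hca : φ (C a) = algebraMap Fq (RatFunc Fq) a := by
        rw [IsScalarTower.algebraMap_apply Fq (Polynomial Fq) (RatFunc Fq)]
        exact RatFunc.algebraMap_C a
      rw [map_sub, map_mul, hca, mul_sub, hzz]
      ring
    rw [expand, key]
    have hq1 : q - 1 + 1 = q := by omega
    rw [map_sub, map_mul, map_pow, map_pow]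
    rw [mul_sub, ← mul_pow, hzz]
    congr 1
    calc φ d ^ q * z = φ d ^ (q-1) * (φ d * z) := by
          rw [← mul_assoc, ← pow_succ, hq1]
    _ = φ d ^ (q-1) * φ Y := by rw [hzz]

lemma carE_zero' (s : Polynomial Fq) : carE Fq 0 s = s := by
  simp [carE]

/-- Recursion: `e_{i+1}(s) = e_i(s)^q - e_i(x^i)^{q-1}·e_i(s)`, given `F_q`-linearity
of `e_i`. -/
lemma carE_succ (i : ℕ)
    (hadd : ∀ s t, carE Fq i (s + t) = carE Fq i s + carE Fq i t)
    (hsmul : ∀ (a : Fq) (s : Polynomial Fq), carE Fq i (C a * s) = C a * carE Fq i s)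
    (s : Polynomial Fq) :
    carE Fq (i + 1) s =
      carE Fq i s ^ Fintype.card Fq -
        carE Fq i (X ^ i) ^ (Fintype.card Fq - 1) * carE Fq i s := by
  have step1 : carE Fq (i+1) s = ∏ a : Fq, carE Fq i (s - C a * X ^ i) := by
    rw [carE, ← Equiv.prod_comp (Fin.snocEquiv (fun _ => Fq)), Fintype.prod_prod_type]
    refine Finset.prod_congr rfl fun a _ => ?_
    rw [carE]
    refine Finset.prod_congr rfl fun c _ => ?_
    rw [Fin.sum_univ_castSucc]
    simp only [Fin.snocEquiv_apply, Fin.snoc_castSucc, Fin.snoc_last, Fin.coe_castSucc,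
      Fin.val_last]
    ring
  rw [step1]
  have step2 : ∀ a : Fq, carE Fq i (s - C a * X ^ i) =
      carE Fq i s - C a * carE Fq i (X ^ i) := by
    intro a
    have : s - C a * X ^ i = s + C (-a) * X ^ i := by rw [map_neg]; ring
    rw [this, hadd, hsmul, map_neg]
    ring
  rw [Finset.prod_congr rfl fun a _ => step2 a]
  exact prod_lin _ _

/-- `F_q`-linearity of `e_i`. -/
lemma carE_lin (i : ℕ) :
    (∀ s t : Polynomial Fq, carE Fq i (s + t) = carE Fq i s + carE Fq i t) ∧
    (∀ (a : Fq) (s : Polynomial Fq), carE Fq i (C a * s) = C a * carE Fq i s) := by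
  induction i with
  | zero => exact ⟨fun s t => by simp [carE_zero'], fun a s => by simp [carE_zero']⟩
  | succ i ih =>
    have h := carE_succ i ih.1 ih.2
    constructor
    · intro s t
      rw [h, h, h, ih.1, fqx_add_pow]
      ring
    · intro a s
      have hCa : (C a : Polynomial Fq) ^ Fintype.card Fq = C a := by
        rw [← C_pow, FiniteField.pow_card]
      rw [h, h, ih.2, mul_pow, hCa]
      ring

/-- `x^i` is a root of `e_{i+1}`. -/
lemma carE_root (i : ℕ) : carE Fq (i + 1) (X ^ i) = 0 := by
  rw [carE]
  apply Finset.prod_eq_zero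
    (Finset.mem_univ (fun j : Fin (i+1) => if j = Fin.last i then (1:Fq) else 0))
  have : (∑ j : Fin (i+1), C (if j = Fin.last i then (1:Fq) else 0) * X ^ (j:ℕ))
      = X ^ i := by
    have : ∀ j : Fin (i+1), C (if j = Fin.last i then (1:Fq) else 0) * X ^ (j:ℕ)
        = if j = Fin.last i then X ^ (j:ℕ) else 0 := by
      intro j; split_ifs <;> simp
    rw [Finset.sum_congr rfl fun j _ => this j, Finset.sum_ite_eq' Finset.univ (Fin.last i)]
    simp
  rw [this, sub_self]

/-- The main inductive package: `e_i(x^i) = D_i` and the key identity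
`e_{i+1}(x·t) = x·e_{i+1}(t) + [i+1]·e_i(t)^q`. -/
lemma carE_main (i : ℕ) :
    carE Fq i (X ^ i) = carD Fq (Fintype.card Fq) i ∧
    ∀ t : Polynomial Fq, carE Fq (i + 1) (X * t) =
      X * carE Fq (i + 1) t +
        carBr Fq (Fintype.card Fq) (i + 1) * carE Fq i t ^ Fintype.card Fq := by
  set q := Fintype.card Fq with hqdef
  have hq2 : 1 < q := Fintype.one_lt_card
  have hq1 : q - 1 + 1 = q := by omega
  have hrec : ∀ (j : ℕ) (s : Polynomial Fq), carE Fq (j + 1) s =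
      carE Fq j s ^ q - carE Fq j (X ^ j) ^ (q - 1) * carE Fq j s :=
    fun j => carE_succ j (carE_lin j).1 (carE_lin j).2
  induction i with
  | zero =>
    constructor
    · simp [carE_zero', carD]
    · intro t
      have h0 : ∀ s : Polynomial Fq, carE Fq 1 s = s ^ q - s := by
        intro s
        rw [hrec 0]
        simp [carE_zero']
      rw [h0, h0, carBr, pow_one, mul_pow, carE_zero']
      ring
  | succ i ih =>
    have hval : carE Fq (i + 1) (X ^ (i + 1)) = carD Fq q (i + 1) := by
      rw [pow_succ', ih.2 (X ^ i), carE_root, ih.1, carD]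
      ring
    refine ⟨hval, fun t => ?_⟩
    set A := carE Fq i t with hA
    set B := carE Fq (i + 1) t with hB
    set D0 := carD Fq q i with hD0
    set D1 := carD Fq q (i + 1) with hD1
    set br1 := carBr Fq q (i + 1) with hbr1
    set br2 := carBr Fq q (i + 2) with hbr2
    have hrecB : B = A ^ q - D0 ^ (q - 1) * A := by
      rw [hB, hrec i, ih.1]
    have hrec2 : ∀ s, carE Fq (i + 2) s =
        carE Fq (i+1) s ^ q - D1 ^ (q-1) * carE Fq (i+1) s := by
      intro s; rw [hrec (i+1), hval]
    rw [hrec2, hrec2, ih.2 t]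
    have h1 : (X * B + br1 * A ^ q) ^ q = X ^ q * B ^ q + br1 ^ q * (A ^ q) ^ q := by
      rw [fqx_add_pow, mul_pow, mul_pow]
    have h2 : B ^ q = (A ^ q) ^ q - (D0 ^ (q-1)) ^ q * A ^ q := by
      rw [hrecB, fqx_sub_pow, mul_pow]
    have h3 : D1 ^ (q - 1) * br1 = br1 ^ q * (D0 ^ (q-1)) ^ q := by
      have e1 : (D0 ^ q) ^ (q - 1) = (D0 ^ (q - 1)) ^ q := by
        rw [← pow_mul, ← pow_mul, Nat.mul_comm]
      have e2 : br1 ^ (q - 1) * br1 = br1 ^ q := by rw [← pow_succ, hq1]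
      rw [hD1, carD, ← hbr1, ← hD0, mul_pow, e1]
      calc br1 ^ (q - 1) * (D0 ^ (q - 1)) ^ q * br1
          = (br1 ^ (q - 1) * br1) * (D0 ^ (q - 1)) ^ q := by ring
        _ = br1 ^ q * (D0 ^ (q - 1)) ^ q := by rw [e2]
    have h4 : br2 = X ^ q - X + br1 ^ q := by
      rw [hbr2, hbr1, carBr, carBr, fqx_sub_pow, ← pow_mul, ← pow_succ]
      ring
    rw [h1]
    linear_combination (-(B^q)) * h4 + (-(br1^q)) * h2 + (-(A^q)) * h3

lemma carBr_ne_zero (i : ℕ) (hi : 1 ≤ i) : carBr Fq (Fintype.card Fq) i ≠ 0 := by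
  rw [carBr]
  exact FiniteField.X_pow_card_pow_sub_X_ne_zero Fq (by omega) Fintype.one_lt_card

lemma carD_ne_zero (i : ℕ) : carD Fq (Fintype.card Fq) i ≠ 0 := by
  induction i with
  | zero => simp [carD]
  | succ i ih =>
    rw [carD]
    exact mul_ne_zero (carBr_ne_zero (i+1) (by omega)) (pow_ne_zero _ ih)

end Aux

/-- The creation/annihilation operator identities for the normalized Carlitz polynomials
`f_i`:  `a⁻ f_i = d f_i = f_{i-1}` for `i ≥ 1` (i.e. `f_i(xt) - x·f_i(t) = f_{i-1}(t)^q`,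
the `q`-th power form of `(d f_i)(t) = f_{i-1}(t)`), `a⁻ f_0 = d f_0 = 0`,
`a⁺ f_{i-1} = (τ - I) f_{i-1} = [i] f_i` (i.e. `f_{i-1}^q - f_{i-1} = [i] f_i`), and
consequently the number operator identity `(a⁺ a⁻) f_i = [i] f_i` for all `i ≥ 0`
(with `[0] = x^{q^0} - x = 0`). -/
theorem carlitz_creation_annihilation (Fq : Type) [Field Fq] [Fintype Fq]
    (q : ℕ) (hq : q = Fintype.card Fq) :
    (∀ i : ℕ, 1 ≤ i → ∀ t : Polynomial Fq,
      fC Fq q i (X * t) -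
          algebraMap (Polynomial Fq) (RatFunc Fq) X * fC Fq q i t =
        fC Fq q (i - 1) t ^ q) ∧
    (∀ t : Polynomial Fq,
      fC Fq q 0 (X * t) -
          algebraMap (Polynomial Fq) (RatFunc Fq) X * fC Fq q 0 t = 0) ∧
    (∀ i : ℕ, 1 ≤ i → ∀ t : Polynomial Fq,
      fC Fq q (i - 1) t ^ q - fC Fq q (i - 1) t =
        algebraMap (Polynomial Fq) (RatFunc Fq) (carBr Fq q i) * fC Fq q i t) ∧
    (∀ (i : ℕ) (t : Polynomial Fq),
      dfC Fq q i t ^ q - dfC Fq q i t =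
        algebraMap (Polynomial Fq) (RatFunc Fq) (carBr Fq q i) * fC Fq q i t) := by
  subst hq
  set q := Fintype.card Fq with hqdef
  have hq2 : 1 < q := Fintype.one_lt_card
  have hq1 : q - 1 + 1 = q := by omega
  set φ := algebraMap (Polynomial Fq) (RatFunc Fq) with hφ
  have hinj := IsFractionRing.injective (Polynomial Fq) (RatFunc Fq)
  have hDne : ∀ j, φ (carD Fq q j) ≠ 0 := fun j =>
    (map_ne_zero_iff φ hinj).mpr (carD_ne_zero j)
  have hbrne : ∀ j, 1 ≤ j → φ (carBr Fq q j) ≠ 0 := fun j hj =>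
    (map_ne_zero_iff φ hinj).mpr (carBr_ne_zero j hj)
  -- the creation identity, in the convenient form
  have part3 : ∀ (j : ℕ) (t : Polynomial Fq),
      fC Fq q j t ^ q - fC Fq q j t = φ (carBr Fq q (j+1)) * fC Fq q (j+1) t := by
    intro j t
    have hrec := carE_succ j (carE_lin j).1 (carE_lin j).2 t
    rw [(carE_main j).1] at hrec
    rw [fC, fC, hrec]
    have hD1 : carD Fq q (j+1) = carBr Fq q (j+1) * carD Fq q j ^ q := rfl
    rw [hD1, div_pow, map_sub, map_mul, map_pow, map_pow, map_mul, map_pow]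
    set x := φ (carE Fq j t)
    set d := φ (carD Fq q j)
    set b := φ (carBr Fq q (j+1))
    have hd : d ≠ 0 := hDne j
    have hb : b ≠ 0 := hbrne (j+1) (by omega)
    have e : d ^ q = d ^ (q-1) * d := by rw [← pow_succ, hq1]
    have lhs : x ^ q / d ^ q - x / d = (x ^ q - d ^ (q-1) * x) / d ^ q := by
      calc x ^ q / d ^ q - x / d
          = x ^ q / d ^ q - (d ^ (q-1) * x) / (d ^ (q-1) * d) := by
            rw [mul_div_mul_left _ _ (pow_ne_zero _ hd)]
        _ = x ^ q / d ^ q - (d ^ (q-1) * x) / d ^ q := by rw [← e]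
        _ = (x ^ q - d ^ (q-1) * x) / d ^ q := div_sub_div_same _ _ _
    rw [lhs, mul_div_assoc', mul_div_mul_left _ _ hb]
  refine ⟨?_, ?_, ?_, ?_⟩
  · -- annihilation for i ≥ 1
    intro i hi t
    obtain ⟨j, rfl⟩ : ∃ j, i = j + 1 := ⟨i - 1, by omega⟩
    have hA := (carE_main j).2 t
    rw [Nat.add_sub_cancel, fC, fC, fC, hA]
    have hD1 : carD Fq q (j+1) = carBr Fq q (j+1) * carD Fq q j ^ q := rfl
    rw [hD1, map_add, map_mul, map_mul, map_pow, map_mul, map_pow, div_pow]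
    set x := φ (carE Fq j t)
    set y := φ (carE Fq (j+1) t)
    set d := φ (carD Fq q j)
    set b := φ (carBr Fq q (j+1))
    have hd : d ≠ 0 := hDne j
    have hb : b ≠ 0 := hbrne (j+1) (by omega)
    have hX : (φ X : RatFunc Fq) = φ X := rfl
    calc (φ X * y + b * x ^ q) / (b * d ^ q) - φ X * (y / (b * d ^ q))
        = (φ X * y) / (b * d ^ q) + (b * x ^ q) / (b * d ^ q)
            - (φ X * y) / (b * d ^ q) := by
          rw [← add_div, mul_div_assoc]
      _ = (b * x ^ q) / (b * d ^ q) := by ring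
      _ = x ^ q / d ^ q := mul_div_mul_left _ _ hb
  · -- the case i = 0
    intro t
    rw [fC, fC, carE_zero', carE_zero']
    have h0 : carD Fq q 0 = 1 := rfl
    rw [h0, map_one, div_one, div_one, map_mul]
    exact sub_self _
  · -- creation for i ≥ 1
    intro i hi t
    obtain ⟨j, rfl⟩ : ∃ j, i = j + 1 := ⟨i - 1, by omega⟩
    rw [Nat.add_sub_cancel]
    exact part3 j t
  · -- the number operator identity
    intro i t
    match i with
    | 0 =>
      have hbr0 : carBr Fq q 0 = 0 := by
        rw [carBr, pow_zero, pow_one, sub_self]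
      rw [hbr0, map_zero, zero_mul]
      show (0 : RatFunc Fq) ^ q - 0 = 0
      rw [zero_pow (by omega), sub_zero]
    | j + 1 =>
      show fC Fq q j t ^ q - fC Fq q j t = φ (carBr Fq q (j+1)) * fC Fq q (j+1) t
      exact part3 j t
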